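/- Residue symmetry identity: let x_1, ..., x_n be distinct indeterminates and α, β parameters. Then for each 1 ≤ k < n: ∑_{I} ∏_{i∈I, j∉I} ((x_i − α x_j)(x_i − β x_j))/((x_i − x_j)(x_i − αβ x_j)) = ∑_{I} ∏_{i∈I, j∉I} ((α x_i − x_j)(β x_i − x_j))/((x_i − x_j)(αβ x_i − x_j)), where both sums range over k-element subsets I of {1,...,n}, as an identity of rational functions in x_1,...,x_n, α, β. -/

import Mathlib

/-- The field of rational functions in the indeterminates `x_1, …, x_n, α, β`. -/
noncomputable abbrev RatFld (n : ℕ) : Type :=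
  FractionRing (MvPolynomial (Fin n ⊕ Fin 2) ℚ)

/-- The indeterminate `x_i` as a rational function. -/
noncomputable def xv (n : ℕ) (i : Fin n) : RatFld n :=
  algebraMap (MvPolynomial (Fin n ⊕ Fin 2) ℚ) (RatFld n) (MvPolynomial.X (Sum.inl i))

/-- The parameter `α` as a rational function. -/
noncomputable def pα (n : ℕ) : RatFld n :=
  algebraMap (MvPolynomial (Fin n ⊕ Fin 2) ℚ) (RatFld n) (MvPolynomial.X (Sum.inr 0))

/-- The parameter `β` as a rational function. -/
noncomputable def pβ (n : ℕ) : RatFld n :=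
  algebraMap (MvPolynomial (Fin n ⊕ Fin 2) ℚ) (RatFld n) (MvPolynomial.X (Sum.inr 1))

open Finset Polynomial

section Core
variable {F : Type*} [Field F] {ι : Type*} [DecidableEq ι]

/-- The basic rational factor. -/
def ffun (a b u v : F) : F := ((u - a*v)*(u - b*v))/((u - v)*(u - a*b*v))

/-- Product of `ffun` over pairs. -/
def trm (a b : F) (x : ι → F) (I C : Finset ι) : F :=
  ∏ i ∈ I, ∏ j ∈ C, ffun a b (x i) (x j)

/-- The sum over `k`-subsets. -/
def EkS (a b : F) (x : ι → F) (S : Finset ι) (k : ℕ) : F :=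
  ∑ I ∈ S.powersetCard k, trm a b x I (S \ I)

lemma trm_insert_left {a b : F} {x : ι → F} {J C : Finset ι} {i : ι} (h : i ∉ J) :
    trm a b x (insert i J) C = (∏ j ∈ C, ffun a b (x i) (x j)) * trm a b x J C := by
  rw [trm, prod_insert h]; rfl

lemma trm_insert_right {a b : F} {x : ι → F} {J C : Finset ι} {j : ι} (h : j ∉ C) :
    trm a b x J (insert j C) = (∏ i ∈ J, ffun a b (x i) (x j)) * trm a b x J C := by
  unfold trm
  rw [← prod_mul_distrib]
  exact prod_congr rfl fun i _ => prod_insert h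

lemma EkS_zero (a b : F) (x : ι → F) (S : Finset ι) : EkS a b x S 0 = 1 := by
  simp [EkS, trm]

lemma EkS_card (a b : F) (x : ι → F) (S : Finset ι) : EkS a b x S S.card = 1 := by
  simp [EkS, Finset.powersetCard_self, trm]

/-- split the sum over `(k+1)`-subsets of `insert z s`. -/
lemma sum_powersetCard_insert {M : Type*} [AddCommMonoid M] {s : Finset ι} {z : ι}
    (hz : z ∉ s) (q : ℕ) (g : Finset ι → M) :
    ∑ I ∈ (insert z s).powersetCard (q+1), g I =
      (∑ I ∈ s.powersetCard (q+1), g I) + ∑ J ∈ s.powersetCard q, g (insert z J) := by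
  rw [Finset.powersetCard_succ_insert hz, Finset.sum_union, Finset.sum_image]
  · intro I hI I' hI' hins
    rw [Finset.mem_coe, mem_powersetCard] at hI hI'
    have hzI : z ∉ I := fun h => hz (hI.1 h)
    have hzI' : z ∉ I' := fun h => hz (hI'.1 h)
    rw [← Finset.erase_insert hzI, ← Finset.erase_insert hzI', hins]
  · rw [Finset.disjoint_right]
    rintro I hI hI'
    rw [Finset.mem_image] at hI
    obtain ⟨J, hJ, rfl⟩ := hI
    rw [mem_powersetCard] at hI'
    exact hz (hI'.1 (Finset.mem_insert_self z J))

end Core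
open Finset Polynomial
section Elem
variable {F : Type*} [Field F]

/-- `f(t,v) * denom = numer`. -/
lemma ffun_mul_denom {a b t v : F} (h1 : t - v ≠ 0) (h2 : t - a*b*v ≠ 0) :
    ffun a b t v * ((t - v)*(t - a*b*v)) = (t - a*v)*(t - b*v) := by
  rw [ffun, div_mul_cancel₀]
  exact mul_ne_zero h1 h2

/-- `f(u,t) * ((t-u)(t-cu)(u-ct)) = (u-at)(u-bt)(cu-t)`. -/
lemma ffun_mul_triple {a b t u : F} (h1 : u - t ≠ 0) (h2 : u - a*b*t ≠ 0) :
    ffun a b u t * ((t - u)*(t - a*b*u)*(u - a*b*t)) =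
      ((u - a*t)*(u - b*t)) * (a*b*u - t) := by
  rw [ffun, div_mul_eq_mul_div, div_eq_iff (mul_ne_zero h1 h2)]
  ring

/-- Key symmetry: `f(c t, u) = f(u, t)` for `c = ab`. -/
lemma ffun_key {a b t u : F} (hc : a*b ≠ 0) (htu : a*b*t - u ≠ 0) (h2 : t - u ≠ 0)
    (h3 : u - t ≠ 0) (h4 : u - a*b*t ≠ 0) :
    ffun a b (a*b*t) u = ffun a b u t := by
  rw [ffun, ffun, div_eq_div_iff]
  · ring
  · exact mul_ne_zero htu (by
      have : a*b*t - a*b*u = a*b*(t-u) := by ring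
      rw [this]; exact mul_ne_zero hc h2)
  · exact mul_ne_zero h3 h4

end Elem
open Finset Polynomial
section Poly
variable {F : Type*} [Field F] {ι : Type*} [DecidableEq ι]

variable (a b : F)

/-- numerator of `f(T, xj)` -/
noncomputable def polA (v : F) : Polynomial F := (X - C (a*v)) * (X - C (b*v))
/-- denominator of `f(T, xj)` -/
noncomputable def polB (v : F) : Polynomial F := (X - C v) * (X - C (a*b*v))
/-- numerator of `f(xi, T)` -/
noncomputable def polA' (u : F) : Polynomial F := (C u - C a * X) * (C u - C b * X)
noncomputable def polG (u : F) : Polynomial F := C (a*b*u) - X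
noncomputable def polH (u : F) : Polynomial F := C u - C (a*b) * X

variable (x : ι → F)

noncomputable def Qin (J : Finset ι) (j : ι) : Polynomial F :=
  (if j ∈ J then polB a b (x j) else polA a b (x j)) * polH a b (x j)

noncomputable def Qout (J : Finset ι) (j : ι) : Polynomial F :=
  if j ∈ J then polA' a b (x j) * polG a b (x j) else polB a b (x j) * polH a b (x j)

noncomputable def Tin (s J : Finset ι) : Polynomial F :=
  C (trm a b x J (s \ J)) * ∏ j ∈ s, Qin a b x J j

noncomputable def Tout (s J : Finset ι) : Polynomial F :=
  C (trm a b x J (s \ J)) * ∏ j ∈ s, Qout a b x J j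

noncomputable def Pk (s : Finset ι) (k : ℕ) : Polynomial F :=
  (∑ J ∈ s.powersetCard (k-1), Tin a b x s J) + ∑ J ∈ s.powersetCard k, Tout a b x s J

-- eval abbreviations
lemma eval_polA (v t : F) : (polA a b v).eval t = (t - a*v)*(t - b*v) := by simp [polA]
lemma eval_polB (v t : F) : (polB a b v).eval t = (t - v)*(t - a*b*v) := by simp [polB]
lemma eval_polA' (u t : F) : (polA' a b u).eval t = (u - a*t)*(u - b*t) := by simp [polA']
lemma eval_polG (u t : F) : (polG a b u).eval t = a*b*u - t := by simp [polG]
lemma eval_polH (u t : F) : (polH a b u).eval t = u - a*b*t := by simp [polH]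

lemma eval_Tin (s J : Finset ι) (hJ : J ⊆ s) (t : F) :
    (Tin a b x s J).eval t = trm a b x J (s \ J) *
      ((∏ j ∈ J, ((t - x j)*(t - a*b*x j)) * (x j - a*b*t)) *
       ∏ j ∈ s \ J, ((t - a*x j)*(t - b*x j)) * (x j - a*b*t)) := by
  rw [Tin, eval_mul, eval_C, eval_prod]
  congr 1
  rw [← Finset.prod_sdiff hJ, mul_comm]
  congr 1
  · exact Finset.prod_congr rfl fun j hj => by
      simp [Qin, hj, apply_ite (eval t), eval_polB, eval_polH]
  · exact Finset.prod_congr rfl fun j hj => by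
      simp [Qin, (Finset.mem_sdiff.mp hj).2, apply_ite (eval t), eval_polA, eval_polH]

lemma eval_Tout (s J : Finset ι) (hJ : J ⊆ s) (t : F) :
    (Tout a b x s J).eval t = trm a b x J (s \ J) *
      ((∏ j ∈ J, ((x j - a*t)*(x j - b*t)) * (a*b*x j - t)) *
       ∏ j ∈ s \ J, ((t - x j)*(t - a*b*x j)) * (x j - a*b*t)) := by
  rw [Tout, eval_mul, eval_C, eval_prod]
  congr 1
  rw [← Finset.prod_sdiff hJ, mul_comm]
  congr 1
  · exact Finset.prod_congr rfl fun j hj => by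
      simp [Qout, hj, apply_ite (eval t), eval_polA', eval_polG]
  · exact Finset.prod_congr rfl fun j hj => by
      simp [Qout, (Finset.mem_sdiff.mp hj).2, apply_ite (eval t), eval_polB, eval_polH]

end Poly
open Finset Polynomial
section Claims
variable {F : Type*} [Field F] {ι : Type*} [DecidableEq ι]

/-- genericity hypotheses -/
structure GenH (a b : F) (x : ι → F) (S : Finset ι) : Prop where
  hxx : ∀ i ∈ S, ∀ j ∈ S, i ≠ j → x i - x j ≠ 0
  hxc : ∀ i ∈ S, ∀ j ∈ S, x i - a*b*x j ≠ 0
  hxc2 : ∀ i ∈ S, ∀ j ∈ S, x i - a*b*(a*b*x j) ≠ 0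

lemma GenH.mono {a b : F} {x : ι → F} {S T : Finset ι} (h : GenH a b x S) (hTS : T ⊆ S) :
    GenH a b x T :=
  ⟨fun i hi j hj => h.hxx i (hTS hi) j (hTS hj),
   fun i hi j hj => h.hxc i (hTS hi) j (hTS hj),
   fun i hi j hj => h.hxc2 i (hTS hi) j (hTS hj)⟩

variable {a b : F} {x : ι → F} {s : Finset ι} {z : ι}

lemma sdiff_insert_insert (hz : z ∉ s) (J : Finset ι) :
    (insert z s) \ (insert z J) = s \ J := by
  ext u
  simp only [Finset.mem_sdiff, Finset.mem_insert]
  constructor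
  · rintro ⟨hu | hu, h2⟩
    · exact absurd (Or.inl hu) h2
    · exact ⟨hu, fun hJ => h2 (Or.inr hJ)⟩
  · rintro ⟨hu, h2⟩
    exact ⟨Or.inr hu, by rintro (rfl | hJ); exacts [hz hu, h2 hJ]⟩

lemma insert_sdiff_notmem (hz : z ∉ s) (J : Finset ι) (hJ : J ⊆ s) :
    (insert z s) \ J = insert z (s \ J) := by
  ext u
  simp only [Finset.mem_sdiff, Finset.mem_insert]
  constructor
  · rintro ⟨hu | hu, h2⟩
    · exact Or.inl hu
    · exact Or.inr ⟨hu, h2⟩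
  · rintro (rfl | ⟨hu, h2⟩)
    · exact ⟨Or.inl rfl, fun h => hz (hJ h)⟩
    · exact ⟨Or.inr hu, h2⟩

/-- C1': evaluation of `Pk` at the generic point `x z`. -/
lemma eval_Pk_generic (hz : z ∉ s) (hg : GenH a b x (insert z s))
    (k : ℕ) (hk1 : 1 ≤ k) :
    (Pk a b x s k).eval (x z) = EkS a b x (insert z s) k *
      ∏ j ∈ s, ((x z - x j)*(x z - a*b*x j)) * (x j - a*b*x z) := by
  have hzmem : z ∈ insert z s := Finset.mem_insert_self z s
  have hmem : ∀ j ∈ s, x z - x j ≠ 0 := fun j hj =>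
    hg.hxx z hzmem j (Finset.mem_insert_of_mem hj) (fun h => hz (h ▸ hj))
  have hmem2 : ∀ j ∈ s, x z - a*b*x j ≠ 0 := fun j hj =>
    hg.hxc z hzmem j (Finset.mem_insert_of_mem hj)
  have hmem3 : ∀ j ∈ s, x j - x z ≠ 0 := fun j hj =>
    hg.hxx j (Finset.mem_insert_of_mem hj) z hzmem (fun h => hz (h ▸ hj))
  have hmem4 : ∀ j ∈ s, x j - a*b*x z ≠ 0 := fun j hj =>
    hg.hxc j (Finset.mem_insert_of_mem hj) z hzmem
  obtain ⟨q, rfl⟩ : ∃ q, k = q + 1 := ⟨k - 1, (Nat.succ_pred_eq_of_pos hk1).symm⟩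
  rw [EkS, sum_powersetCard_insert hz, add_mul, Finset.sum_mul, Finset.sum_mul,
    Pk, eval_add, eval_finset_sum, eval_finset_sum]
  rw [Nat.add_sub_cancel, add_comm]
  congr 1
  · -- Tout part : subsets not containing z, card q+1
    refine Finset.sum_congr rfl fun J hJ => ?_
    rw [Finset.mem_powersetCard] at hJ
    rw [eval_Tout a b x s J hJ.1, insert_sdiff_notmem hz J hJ.1,
      trm_insert_right (fun h => hz (Finset.mem_sdiff.mp h).1),
      ← Finset.prod_sdiff hJ.1 (f := fun j => ((x z - x j)*(x z - a*b*x j)) * (x j - a*b*x z))]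
    have key : (∏ i ∈ J, ffun a b (x i) (x z)) *
        ∏ i ∈ J, ((x z - x i)*(x z - a*b*x i)) * (x i - a*b*x z) =
        ∏ i ∈ J, ((x i - a*x z)*(x i - b*x z)) * (a*b*x i - x z) := by
      rw [← Finset.prod_mul_distrib]
      refine Finset.prod_congr rfl fun i hi => ?_
      have := ffun_mul_triple (a := a) (b := b) (t := x z) (u := x i)
        (hmem3 i (hJ.1 hi)) (hmem4 i (hJ.1 hi))
      calc ffun a b (x i) (x z) * ((x z - x i) * (x z - a*b*x i) * (x i - a*b*x z))
          = ffun a b (x i) (x z) * ((x z - x i) * (x z - a*b*x i) * (x i - a*b*x z)) := rfl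
        _ = (x i - a*x z)*(x i - b*x z) * (a*b*x i - x z) := this
    calc trm a b x J (s \ J) *
        ((∏ i ∈ J, ((x i - a*x z)*(x i - b*x z)) * (a*b*x i - x z)) *
          ∏ j ∈ s \ J, ((x z - x j)*(x z - a*b*x j)) * (x j - a*b*x z))
        = trm a b x J (s \ J) *
        (((∏ i ∈ J, ffun a b (x i) (x z)) *
            ∏ i ∈ J, ((x z - x i)*(x z - a*b*x i)) * (x i - a*b*x z)) *
          ∏ j ∈ s \ J, ((x z - x j)*(x z - a*b*x j)) * (x j - a*b*x z)) := by rw [key]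
      _ = _ := by ring
  · -- Tin part : subsets containing z
    refine Finset.sum_congr rfl fun J hJ => ?_
    rw [Finset.mem_powersetCard] at hJ
    have hzJ : z ∉ J := fun h => hz (hJ.1 h)
    rw [eval_Tin a b x s J hJ.1, sdiff_insert_insert hz J, trm_insert_left hzJ,
      ← Finset.prod_sdiff hJ.1 (f := fun j => ((x z - x j)*(x z - a*b*x j)) * (x j - a*b*x z))]
    have key : (∏ j ∈ s \ J, ffun a b (x z) (x j)) *
        ∏ j ∈ s \ J, ((x z - x j)*(x z - a*b*x j)) * (x j - a*b*x z) =
        ∏ j ∈ s \ J, ((x z - a*x j)*(x z - b*x j)) * (x j - a*b*x z) := by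
      rw [← Finset.prod_mul_distrib]
      refine Finset.prod_congr rfl fun j hj => ?_
      have hjs : j ∈ s := (Finset.mem_sdiff.mp hj).1
      have := ffun_mul_denom (a := a) (b := b) (t := x z) (v := x j)
        (hmem j hjs) (hmem2 j hjs)
      calc ffun a b (x z) (x j) * ((x z - x j) * (x z - a*b*x j) * (x j - a*b*x z))
          = ffun a b (x z) (x j) * ((x z - x j) * (x z - a*b*x j)) * (x j - a*b*x z) := by ring
        _ = (x z - a*x j)*(x z - b*x j) * (x j - a*b*x z) := by rw [this]
    calc trm a b x J (s \ J) *
        ((∏ j ∈ J, ((x z - x j)*(x z - a*b*x j)) * (x j - a*b*x z)) *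
          ∏ j ∈ s \ J, ((x z - a*x j)*(x z - b*x j)) * (x j - a*b*x z))
        = trm a b x J (s \ J) *
        ((∏ j ∈ J, ((x z - x j)*(x z - a*b*x j)) * (x j - a*b*x z)) *
          ((∏ j ∈ s \ J, ffun a b (x z) (x j)) *
            ∏ j ∈ s \ J, ((x z - x j)*(x z - a*b*x j)) * (x j - a*b*x z))) := by rw [key]
      _ = _ := by ring
end Claims
open Finset Polynomial
section Claims2
variable {F : Type*} [Field F] {ι : Type*} [DecidableEq ι]
variable {a b : F} {x : ι → F} {s : Finset ι} {m : ι}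

lemma pc_filter_not (hm : m ∈ s) (q : ℕ) :
    (s.powersetCard q).filter (fun J => m ∉ J) = (s.erase m).powersetCard q := by
  ext J
  simp only [Finset.mem_filter, Finset.mem_powersetCard, Finset.subset_erase]
  tauto

lemma sum_pc_filter_mem {M : Type*} [AddCommMonoid M] (hm : m ∈ s) (q : ℕ) (g : Finset ι → M) :
    ∑ J ∈ (s.powersetCard (q+1)).filter (fun J => m ∈ J), g J =
      ∑ J ∈ (s.erase m).powersetCard q, g (insert m J) := by
  refine Finset.sum_bij' (fun J _ => J.erase m) (fun J _ => insert m J) ?_ ?_ ?_ ?_ ?_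
  · intro J hJ
    rw [Finset.mem_filter, Finset.mem_powersetCard] at hJ
    rw [Finset.mem_powersetCard]
    exact ⟨Finset.erase_subset_erase m hJ.1.1, by rw [Finset.card_erase_of_mem hJ.2, hJ.1.2]; omega⟩
  · intro J hJ
    rw [Finset.mem_powersetCard] at hJ
    have hmJ : m ∉ J := fun h => (Finset.mem_erase.mp (hJ.1 h)).1 rfl
    rw [Finset.mem_filter, Finset.mem_powersetCard]
    exact ⟨⟨Finset.insert_subset hm (hJ.1.trans (Finset.erase_subset m s)),
      by rw [Finset.card_insert_of_notMem hmJ, hJ.2]⟩, Finset.mem_insert_self m J⟩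
  · intro J hJ
    rw [Finset.mem_filter] at hJ
    exact Finset.insert_erase hJ.2
  · intro J hJ
    rw [Finset.mem_powersetCard] at hJ
    exact Finset.erase_insert (fun h => (Finset.mem_erase.mp (hJ.1 h)).1 rfl)
  · intro J hJ
    rw [Finset.mem_filter] at hJ
    rw [Finset.insert_erase hJ.2]

lemma sdiff_eq_insert (hm : m ∈ s) {J : Finset ι} (hJ : J ⊆ s.erase m) :
    s \ J = insert m ((s.erase m) \ J) := by
  have hmJ : m ∉ J := fun h => (Finset.mem_erase.mp (hJ h)).1 rfl
  ext u
  simp only [Finset.mem_sdiff, Finset.mem_insert, Finset.mem_erase]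
  constructor
  · rintro ⟨hu, h2⟩
    by_cases hum : u = m
    · exact Or.inl hum
    · exact Or.inr ⟨⟨hum, hu⟩, h2⟩
  · rintro (rfl | ⟨⟨_, hu⟩, h2⟩)
    · exact ⟨hm, hmJ⟩
    · exact ⟨hu, h2⟩

end Claims2
open Finset Polynomial
section C2
variable {F : Type*} [Field F] {ι : Type*} [DecidableEq ι]
variable {a b : F} {x : ι → F} {s : Finset ι} {z m : ι}

/-- C2 : `Pk` vanishes at `x m` for `m ∈ s`. -/
lemma eval_Pk_root_x (hz : z ∉ s) (hg : GenH a b x (insert z s)) (hm : m ∈ s)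
    (k : ℕ) (hk1 : 1 ≤ k) :
    (Pk a b x s k).eval (x m) = 0 := by
  have hsub : ∀ i ∈ s, i ∈ insert z s := fun i hi => Finset.mem_insert_of_mem hi
  obtain ⟨q, rfl⟩ : ∃ q, k = q + 1 := ⟨k - 1, (Nat.succ_pred_eq_of_pos hk1).symm⟩
  set w := s.erase m with hw
  have hmw : m ∉ w := Finset.notMem_erase m s
  rw [Pk, eval_add, eval_finset_sum, eval_finset_sum, Nat.add_sub_cancel]
  rw [← Finset.sum_filter_add_sum_filter_not (s.powersetCard q) (fun J => m ∈ J),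
      ← Finset.sum_filter_add_sum_filter_not (s.powersetCard (q+1)) (fun J => m ∈ J)]
  -- the Tin terms with m ∈ J vanish
  have h1 : ∑ J ∈ (s.powersetCard q).filter (fun J => m ∈ J), (Tin a b x s J).eval (x m) = 0 := by
    refine Finset.sum_eq_zero fun J hJ => ?_
    rw [Finset.mem_filter, Finset.mem_powersetCard] at hJ
    rw [eval_Tin a b x s J hJ.1.1]
    rw [Finset.prod_eq_zero hJ.2 (by ring_nf : ((x m - x m)*(x m - a*b*x m)) * (x m - a*b*x m) = 0)]
    · ring
  -- the Tout terms with m ∉ J vanish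
  have h2 : ∑ J ∈ (s.powersetCard (q+1)).filter (fun J => m ∉ J),
      (Tout a b x s J).eval (x m) = 0 := by
    refine Finset.sum_eq_zero fun J hJ => ?_
    rw [Finset.mem_filter, Finset.mem_powersetCard] at hJ
    rw [eval_Tout a b x s J hJ.1.1]
    have hms : m ∈ s \ J := Finset.mem_sdiff.mpr ⟨hm, hJ.2⟩
    rw [Finset.prod_eq_zero hms
      (by ring_nf : ((x m - x m)*(x m - a*b*x m)) * (x m - a*b*x m) = 0)]
    ring
  rw [h1, zero_add, h2, add_zero, pc_filter_not hm, sum_pc_filter_mem hm q, ← hw,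
    ← Finset.sum_add_distrib]
  -- now pair up
  refine Finset.sum_eq_zero fun J hJ => ?_
  rw [Finset.mem_powersetCard] at hJ
  have hJs : J ⊆ s := hJ.1.trans (Finset.erase_subset m s)
  have hmJ : m ∉ J := fun h => (Finset.mem_erase.mp (hJ.1 h)).1 rfl
  have hiJ : insert m J ⊆ s := Finset.insert_subset hm hJs
  have hs : s = insert m w := (Finset.insert_erase hm).symm
  have hmwJ : m ∉ w \ J := fun h => hmw (Finset.mem_sdiff.mp h).1
  have hsdJ : s \ J = insert m (w \ J) := sdiff_eq_insert hm hJ.1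
  have hsdmJ : s \ insert m J = w \ J := by
    rw [hs]; exact sdiff_insert_insert hmw J
  rw [eval_Tin a b x s J hJs, eval_Tout a b x s (insert m J) hiJ, hsdJ, hsdmJ,
    trm_insert_right hmwJ, trm_insert_left hmJ,
    Finset.prod_insert hmwJ, Finset.prod_insert hmJ]
  have key1 : (∏ i ∈ J, ffun a b (x i) (x m)) *
      ∏ j ∈ J, ((x m - x j)*(x m - a*b*x j)) * (x j - a*b*x m) =
      ∏ j ∈ J, ((x j - a*x m)*(x j - b*x m)) * (a*b*x j - x m) := by
    rw [← Finset.prod_mul_distrib]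
    refine Finset.prod_congr rfl fun i hi => ?_
    have him : i ≠ m := fun h => hmJ (h ▸ hi)
    exact ffun_mul_triple
      (hg.hxx i (hsub i (hJs hi)) m (hsub m hm) him)
      (hg.hxc i (hsub i (hJs hi)) m (hsub m hm))
  have key2 : (∏ j ∈ w \ J, ffun a b (x m) (x j)) *
      ∏ j ∈ w \ J, ((x m - x j)*(x m - a*b*x j)) * (x j - a*b*x m) =
      ∏ j ∈ w \ J, ((x m - a*x j)*(x m - b*x j)) * (x j - a*b*x m) := by
    rw [← Finset.prod_mul_distrib]
    refine Finset.prod_congr rfl fun j hj => ?_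
    have hjs : j ∈ s := (Finset.erase_subset m s) (Finset.mem_sdiff.mp hj).1
    have hjm : m ≠ j := fun h => hmwJ (h ▸ hj)
    have e := ffun_mul_denom (a := a) (b := b) (t := x m) (v := x j)
      (hg.hxx m (hsub m hm) j (hsub j hjs) hjm) (hg.hxc m (hsub m hm) j (hsub j hjs))
    calc ffun a b (x m) (x j) * ((x m - x j) * (x m - a*b*x j) * (x j - a*b*x m))
        = ffun a b (x m) (x j) * ((x m - x j) * (x m - a*b*x j)) * (x j - a*b*x m) := by ring
      _ = _ := by rw [e]
  have key3 : ((x m - a*x m)*(x m - b*x m)) * (x m - a*b*x m) +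
      ((x m - a*x m)*(x m - b*x m)) * (a*b*x m - x m) = 0 := by ring
  linear_combination
    (trm a b x J (w \ J) * (((x m - a*x m)*(x m - b*x m)) * (x m - a*b*x m)) *
      (∏ j ∈ w \ J, ((x m - a*x j)*(x m - b*x j)) * (x j - a*b*x m))) * key1 +
    (trm a b x J (w \ J) * (((x m - a*x m)*(x m - b*x m)) * (a*b*x m - x m)) *
      (∏ j ∈ J, ((x j - a*x m)*(x j - b*x m)) * (a*b*x j - x m))) * key2 +
    (trm a b x J (w \ J) * (∏ j ∈ J, ((x j - a*x m)*(x j - b*x m)) * (a*b*x j - x m)) *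
      (∏ j ∈ w \ J, ((x m - a*x j)*(x m - b*x j)) * (x j - a*b*x m))) * key3
end C2
open Finset Polynomial
section C3
variable {F : Type*} [Field F] {ι : Type*} [DecidableEq ι]
variable {a b : F} {x : ι → F} {s : Finset ι} {z m : ι}

/-- C3 : evaluation of `Pk` at `a*b*x m`. -/
lemma eval_Pk_root_c (hz : z ∉ s) (hg : GenH a b x (insert z s)) (hab : a*b ≠ 0)
    (hm : m ∈ s) (k : ℕ) (hk1 : 1 ≤ k) :
    (Pk a b x s k).eval (a*b*x m) =
      ((((a*b*x m) - a*x m)*((a*b*x m) - b*x m)) * (x m - a*b*(a*b*x m)) *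
        ∏ l ∈ s.erase m, (ffun a b (x l) (x m) *
          (((a*b*x m - x l)*(a*b*x m - a*b*x l)) * (x l - a*b*(a*b*x m))))) *
      EkS a b x (s.erase m) (k-1) := by
  have hsub : ∀ i ∈ s, i ∈ insert z s := fun i hi => Finset.mem_insert_of_mem hi
  obtain ⟨q, rfl⟩ : ∃ q, k = q + 1 := ⟨k - 1, (Nat.succ_pred_eq_of_pos hk1).symm⟩
  set t := a*b*x m with ht
  set w := s.erase m with hw
  have hmw : m ∉ w := Finset.notMem_erase m s
  rw [Pk, eval_add, eval_finset_sum, eval_finset_sum, Nat.add_sub_cancel]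
  -- all Tout terms vanish
  have h2 : ∑ J ∈ s.powersetCard (q+1), (Tout a b x s J).eval t = 0 := by
    refine Finset.sum_eq_zero fun J hJ => ?_
    rw [Finset.mem_powersetCard] at hJ
    rw [eval_Tout a b x s J hJ.1]
    by_cases hmJ : m ∈ J
    · rw [Finset.prod_eq_zero hmJ
        (show ((x m - a*t)*(x m - b*t)) * (a*b*x m - t) = 0 by rw [ht]; ring)]
      ring
    · rw [Finset.prod_eq_zero (Finset.mem_sdiff.mpr ⟨hm, hmJ⟩)
        (show ((t - x m)*(t - a*b*x m)) * (x m - a*b*t) = 0 by rw [ht]; ring)]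
      ring
  -- Tin terms with m ∈ J vanish
  rw [h2, add_zero,
    ← Finset.sum_filter_add_sum_filter_not (s.powersetCard q) (fun J => m ∈ J)]
  have h1 : ∑ J ∈ (s.powersetCard q).filter (fun J => m ∈ J), (Tin a b x s J).eval t = 0 := by
    refine Finset.sum_eq_zero fun J hJ => ?_
    rw [Finset.mem_filter, Finset.mem_powersetCard] at hJ
    rw [eval_Tin a b x s J hJ.1.1,
      Finset.prod_eq_zero hJ.2
        (show ((t - x m)*(t - a*b*x m)) * (x m - a*b*t) = 0 by rw [ht]; ring)]
    ring
  rw [h1, zero_add, pc_filter_not hm, ← hw, EkS, Finset.mul_sum]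
  refine Finset.sum_congr rfl fun J hJ => ?_
  rw [Finset.mem_powersetCard] at hJ
  have hJs : J ⊆ s := hJ.1.trans (Finset.erase_subset m s)
  have hmwJ : m ∉ w \ J := fun h => hmw (Finset.mem_sdiff.mp h).1
  have hsdJ : s \ J = insert m (w \ J) := sdiff_eq_insert hm hJ.1
  rw [eval_Tin a b x s J hJs, hsdJ, trm_insert_right hmwJ, Finset.prod_insert hmwJ]
  -- per-element rewrite on w \ J
  have e1 : ∏ j ∈ w \ J, ((t - a*x j)*(t - b*x j)) * (x j - a*b*t) =
      ∏ j ∈ w \ J, (ffun a b (x j) (x m) *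
        (((t - x j)*(t - a*b*x j)) * (x j - a*b*t))) := by
    refine Finset.prod_congr rfl fun j hj => ?_
    have hjw : j ∈ w := (Finset.mem_sdiff.mp hj).1
    have hjs : j ∈ s := (Finset.erase_subset m s) hjw
    have hjm : j ≠ m := (Finset.mem_erase.mp hjw).1
    have h1 : t - x j ≠ 0 := by
      rw [ht]
      intro h; exact hg.hxc j (hsub j hjs) m (hsub m hm) (by linear_combination -h)
    have h2 : t - a*b*x j ≠ 0 := by
      rw [ht]
      intro h
      exact hg.hxx m (hsub m hm) j (hsub j hjs) (Ne.symm hjm)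
        (by
          apply mul_left_cancel₀ hab
          linear_combination h)
    have hkey : ffun a b t (x j) = ffun a b (x j) (x m) := by
      rw [ht]
      exact ffun_key hab (by rw [← ht]; exact h1)
        (hg.hxx m (hsub m hm) j (hsub j hjs) (Ne.symm hjm))
        (hg.hxx j (hsub j hjs) m (hsub m hm) hjm)
        (hg.hxc j (hsub j hjs) m (hsub m hm))
    have e := ffun_mul_denom (a := a) (b := b) (t := t) (v := x j) h1 h2
    rw [hkey] at e
    calc ((t - a*x j)*(t - b*x j)) * (x j - a*b*t)
        = (ffun a b (x j) (x m) * ((t - x j)*(t - a*b*x j))) * (x j - a*b*t) := by rw [e]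
      _ = _ := by ring
  rw [e1]
  -- merge products
  have e2 : (∏ i ∈ J, ffun a b (x i) (x m)) *
      ∏ j ∈ J, ((t - x j)*(t - a*b*x j)) * (x j - a*b*t) =
      ∏ j ∈ J, (ffun a b (x j) (x m) * (((t - x j)*(t - a*b*x j)) * (x j - a*b*t))) :=
    Finset.prod_mul_distrib.symm
  have e3 : (∏ j ∈ w \ J, (ffun a b (x j) (x m) *
        (((t - x j)*(t - a*b*x j)) * (x j - a*b*t)))) *
      ∏ j ∈ J, (ffun a b (x j) (x m) * (((t - x j)*(t - a*b*x j)) * (x j - a*b*t))) =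
      ∏ l ∈ w, (ffun a b (x l) (x m) * (((t - x l)*(t - a*b*x l)) * (x l - a*b*t))) :=
    Finset.prod_sdiff hJ.1
  linear_combination (trm a b x J (w \ J) *
      (((t - a*x m)*(t - b*x m)) * (x m - a*b*t)) *
      (∏ j ∈ w \ J, (ffun a b (x j) (x m) * (((t - x j)*(t - a*b*x j)) * (x j - a*b*t))))) * e2 +
    (trm a b x J (w \ J) * (((t - a*x m)*(t - b*x m)) * (x m - a*b*t))) * e3
end C3
open Finset Polynomial
section C4
variable {F : Type*} [Field F] {ι : Type*} [DecidableEq ι]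
variable {a b : F} {x : ι → F} {s : Finset ι} {z m : ι}

/-- C4 : evaluation of `Pk` at `(a*b)⁻¹ * x m`. -/
lemma eval_Pk_root_inv (hz : z ∉ s) (hg : GenH a b x (insert z s)) (hab : a*b ≠ 0)
    (hm : m ∈ s) (k : ℕ) (hk1 : 1 ≤ k) :
    (Pk a b x s k).eval ((a*b)⁻¹ * x m) =
      ((((x m - a*((a*b)⁻¹ * x m))*(x m - b*((a*b)⁻¹ * x m))) * (a*b*x m - (a*b)⁻¹ * x m)) *
        ∏ l ∈ s.erase m, (ffun a b (x m) (x l) *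
          ((((a*b)⁻¹ * x m - x l)*((a*b)⁻¹ * x m - a*b*x l)) * (x l - x m)))) *
      EkS a b x (s.erase m) (k-1) := by
  have hsub : ∀ i ∈ s, i ∈ insert z s := fun i hi => Finset.mem_insert_of_mem hi
  obtain ⟨q, rfl⟩ : ∃ q, k = q + 1 := ⟨k - 1, (Nat.succ_pred_eq_of_pos hk1).symm⟩
  set t := (a*b)⁻¹ * x m with ht
  have habt : a*b*t = x m := by rw [ht]; rw [← mul_assoc, mul_inv_cancel₀ hab, one_mul]
  set w := s.erase m with hw
  have hmw : m ∉ w := Finset.notMem_erase m s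
  rw [Pk, eval_add, eval_finset_sum, eval_finset_sum, Nat.add_sub_cancel]
  -- all Tin terms vanish
  have h1 : ∑ J ∈ s.powersetCard q, (Tin a b x s J).eval t = 0 := by
    refine Finset.sum_eq_zero fun J hJ => ?_
    rw [Finset.mem_powersetCard] at hJ
    rw [eval_Tin a b x s J hJ.1]
    by_cases hmJ : m ∈ J
    · rw [Finset.prod_eq_zero hmJ
        (show ((t - x m)*(t - a*b*x m)) * (x m - a*b*t) = 0 by rw [habt]; ring)]
      ring
    · rw [Finset.prod_eq_zero (Finset.mem_sdiff.mpr ⟨hm, hmJ⟩)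
        (show ((t - a*x m)*(t - b*x m)) * (x m - a*b*t) = 0 by rw [habt]; ring)]
      ring
  rw [h1, zero_add,
    ← Finset.sum_filter_add_sum_filter_not (s.powersetCard (q+1)) (fun J => m ∈ J)]
  -- Tout terms with m ∉ J vanish
  have h2 : ∑ J ∈ (s.powersetCard (q+1)).filter (fun J => m ∉ J),
      (Tout a b x s J).eval t = 0 := by
    refine Finset.sum_eq_zero fun J hJ => ?_
    rw [Finset.mem_filter, Finset.mem_powersetCard] at hJ
    rw [eval_Tout a b x s J hJ.1.1,
      Finset.prod_eq_zero (Finset.mem_sdiff.mpr ⟨hm, hJ.2⟩)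
        (show ((t - x m)*(t - a*b*x m)) * (x m - a*b*t) = 0 by rw [habt]; ring)]
    ring
  rw [h2, add_zero, sum_pc_filter_mem hm q, ← hw, EkS, Finset.mul_sum]
  refine Finset.sum_congr rfl fun J hJ => ?_
  rw [Finset.mem_powersetCard] at hJ
  have hJs : J ⊆ s := hJ.1.trans (Finset.erase_subset m s)
  have hmJ : m ∉ J := fun h => hmw (hJ.1 h)
  have hiJ : insert m J ⊆ s := Finset.insert_subset hm hJs
  have hmwJ : m ∉ w \ J := fun h => hmw (Finset.mem_sdiff.mp h).1
  have hs : s = insert m w := (Finset.insert_erase hm).symm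
  have hsdmJ : s \ insert m J = w \ J := by rw [hs]; exact sdiff_insert_insert hmw J
  rw [eval_Tout a b x s (insert m J) hiJ, hsdmJ, trm_insert_left hmJ,
    Finset.prod_insert hmJ]
  -- per-element rewrite on J
  have e1 : ∏ i ∈ J, ((x i - a*t)*(x i - b*t)) * (a*b*x i - t) =
      ∏ i ∈ J, (ffun a b (x m) (x i) *
        (((t - x i)*(t - a*b*x i)) * (x i - x m))) := by
    refine Finset.prod_congr rfl fun i hi => ?_
    have hiw : i ∈ w := hJ.1 hi
    have his : i ∈ s := (Finset.erase_subset m s) hiw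
    have him : i ≠ m := (Finset.mem_erase.mp hiw).1
    have h3 : x i - x m ≠ 0 := hg.hxx i (hsub i his) m (hsub m hm) him
    have h1 : x i - t ≠ 0 := by
      intro h
      apply hg.hxc m (hsub m hm) i (hsub i his)
      rw [sub_eq_zero.mp h, habt, sub_self]
    have h2 : x i - a*b*t ≠ 0 := by rw [habt]; exact h3
    have hkey : ffun a b (x m) (x i) = ffun a b (x i) t := by
      rw [← habt]
      refine ffun_key hab ?_ ?_ ?_ ?_
      · rw [habt]
        intro hcon
        exact h3 (by linear_combination -hcon)
      · intro h
        apply hg.hxc m (hsub m hm) i (hsub i his)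
        have : a*b*(t - x i) = 0 := mul_eq_zero_of_right _ h
        rw [mul_sub, habt] at this
        linear_combination this
      · exact h1
      · exact h2
    have e := ffun_mul_triple (a := a) (b := b) (t := t) (u := x i) h1 h2
    rw [← hkey] at e
    calc ((x i - a*t)*(x i - b*t)) * (a*b*x i - t)
        = ffun a b (x m) (x i) * ((t - x i) * (t - a*b*x i) * (x i - a*b*t)) := e.symm
      _ = _ := by rw [habt]
  rw [e1]
  -- merge products
  have e2 : (∏ j ∈ w \ J, ffun a b (x m) (x j)) *
      ∏ j ∈ w \ J, ((t - x j)*(t - a*b*x j)) * (x j - a*b*t) =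
      ∏ j ∈ w \ J, (ffun a b (x m) (x j) * (((t - x j)*(t - a*b*x j)) * (x j - x m))) := by
    rw [← Finset.prod_mul_distrib]
    refine Finset.prod_congr rfl fun j hj => ?_
    rw [habt]
  have e3 : (∏ j ∈ w \ J, (ffun a b (x m) (x j) *
        (((t - x j)*(t - a*b*x j)) * (x j - x m)))) *
      ∏ j ∈ J, (ffun a b (x m) (x j) * (((t - x j)*(t - a*b*x j)) * (x j - x m))) =
      ∏ l ∈ w, (ffun a b (x m) (x l) * (((t - x l)*(t - a*b*x l)) * (x l - x m))) :=
    Finset.prod_sdiff hJ.1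
  linear_combination (trm a b x J (w \ J) *
      ((((x m - a*t)*(x m - b*t)) * (a*b*x m - t))) *
      (∏ j ∈ J, (ffun a b (x m) (x j) * (((t - x j)*(t - a*b*x j)) * (x j - x m))))) * e2 +
    (trm a b x J (w \ J) * (((x m - a*t)*(x m - b*t)) * (a*b*x m - t))) * e3
end C4
open Finset Polynomial
section C5
variable {F : Type*} [Field F] {ι : Type*} [DecidableEq ι]
variable {a b : F} {x : ι → F} {s : Finset ι}

lemma natDegree_polA_le (v : F) : (polA a b v).natDegree ≤ 2 :=
  (natDegree_mul_le).trans (by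
    have h1 := natDegree_X_sub_C_le (a*v) (R := F)
    have h2 := natDegree_X_sub_C_le (b*v) (R := F)
    omega)

lemma coeff_polA (v : F) : (polA a b v).coeff 2 = 1 := by
  have : (polA a b v).Monic := (monic_X_sub_C _).mul (monic_X_sub_C _)
  have hd : (polA a b v).natDegree = 2 := by
    rw [polA, (monic_X_sub_C _).natDegree_mul (monic_X_sub_C _), natDegree_X_sub_C,
      natDegree_X_sub_C]
  rw [← hd]; exact this

lemma natDegree_polB_le (v : F) : (polB a b v).natDegree ≤ 2 :=
  (natDegree_mul_le).trans (by
    have h1 := natDegree_X_sub_C_le (v) (R := F)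
    have h2 := natDegree_X_sub_C_le (a*b*v) (R := F)
    omega)

lemma coeff_polB (v : F) : (polB a b v).coeff 2 = 1 := by
  have : (polB a b v).Monic := (monic_X_sub_C _).mul (monic_X_sub_C _)
  have hd : (polB a b v).natDegree = 2 := by
    rw [polB, (monic_X_sub_C _).natDegree_mul (monic_X_sub_C _), natDegree_X_sub_C,
      natDegree_X_sub_C]
  rw [← hd]; exact this

lemma natDegree_CmulX_le (r : F) : (C r * X : F[X]).natDegree ≤ 1 := by
  refine natDegree_mul_le.trans ?_
  rw [natDegree_C, natDegree_X]

lemma natDegree_polH_le (u : F) : (polH a b u).natDegree ≤ 1 := by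
  refine (natDegree_sub_le _ _).trans ?_
  simp only [natDegree_C, max_le_iff]
  exact ⟨Nat.zero_le 1, natDegree_CmulX_le _⟩

lemma coeff_polH (u : F) : (polH a b u).coeff 1 = -(a*b) := by
  simp [polH, coeff_sub, coeff_C]

lemma natDegree_polG_le (u : F) : (polG a b u).natDegree ≤ 1 := by
  refine (natDegree_sub_le _ _).trans ?_
  simp only [natDegree_C, natDegree_X, max_le_iff]
  exact ⟨Nat.zero_le 1, le_rfl⟩

lemma coeff_polG (u : F) : (polG a b u).coeff 1 = -1 := by
  simp [polG, coeff_sub, coeff_C]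

lemma natDegree_polA'_le (u : F) : (polA' a b u).natDegree ≤ 2 :=
  (natDegree_mul_le).trans (by
    have h1 : (C u - C a * X : F[X]).natDegree ≤ 1 := (natDegree_sub_le _ _).trans (max_le (by simp) (natDegree_CmulX_le _))
    have h2 : (C u - C b * X : F[X]).natDegree ≤ 1 := (natDegree_sub_le _ _).trans (max_le (by simp) (natDegree_CmulX_le _))
    omega)

lemma coeff_polA' (u : F) : (polA' a b u).coeff 2 = a*b := by
  have h1 : (C u - C a * X : F[X]).natDegree ≤ 1 := (natDegree_sub_le _ _).trans (max_le (by simp) (natDegree_CmulX_le _))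
  have h2 : (C u - C b * X : F[X]).natDegree ≤ 1 := (natDegree_sub_le _ _).trans (max_le (by simp) (natDegree_CmulX_le _))
  rw [polA', show (2:ℕ) = 1 + 1 from rfl, coeff_mul_add_eq_of_natDegree_le h1 h2]
  simp [coeff_sub, coeff_C]

lemma natDegree_Qin_le (J : Finset ι) (j : ι) : (Qin a b x J j).natDegree ≤ 3 := by
  rw [Qin]
  refine (natDegree_mul_le).trans ?_
  have h1 : ((if j ∈ J then polB a b (x j) else polA a b (x j))).natDegree ≤ 2 := by
    split
    exacts [natDegree_polB_le _, natDegree_polA_le _]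
  have h2 := natDegree_polH_le (a := a) (b := b) (x j)
  omega

lemma coeff_Qin (J : Finset ι) (j : ι) : (Qin a b x J j).coeff 3 = -(a*b) := by
  rw [Qin, show (3:ℕ) = 2 + 1 from rfl,
    coeff_mul_add_eq_of_natDegree_le (by split; exacts [natDegree_polB_le _, natDegree_polA_le _])
      (natDegree_polH_le _),
    coeff_polH]
  split
  · rw [coeff_polB]; ring
  · rw [coeff_polA]; ring

lemma natDegree_Qout_le (J : Finset ι) (j : ι) : (Qout a b x J j).natDegree ≤ 3 := by
  rw [Qout]
  split
  · refine (natDegree_mul_le).trans ?_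
    have h1 := natDegree_polA'_le (a := a) (b := b) (x j)
    have h2 := natDegree_polG_le (a := a) (b := b) (x j)
    omega
  · refine (natDegree_mul_le).trans ?_
    have h1 := natDegree_polB_le (a := a) (b := b) (x j)
    have h2 := natDegree_polH_le (a := a) (b := b) (x j)
    omega

lemma coeff_Qout (J : Finset ι) (j : ι) : (Qout a b x J j).coeff 3 = -(a*b) := by
  rw [Qout]
  split
  · rw [show (3:ℕ) = 2 + 1 from rfl,
      coeff_mul_add_eq_of_natDegree_le (natDegree_polA'_le _) (natDegree_polG_le _),
      coeff_polA', coeff_polG]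
    ring
  · rw [show (3:ℕ) = 2 + 1 from rfl,
      coeff_mul_add_eq_of_natDegree_le (natDegree_polB_le _) (natDegree_polH_le _),
      coeff_polB, coeff_polH]
    ring

lemma natDegree_Tin_le (J : Finset ι) : (Tin a b x s J).natDegree ≤ s.card * 3 := by
  rw [Tin]
  refine (natDegree_mul_le).trans ?_
  rw [natDegree_C, zero_add]
  refine (natDegree_prod_le _ _).trans ?_
  calc ∑ j ∈ s, (Qin a b x J j).natDegree ≤ ∑ _j ∈ s, 3 :=
        Finset.sum_le_sum fun j _ => natDegree_Qin_le J j
    _ = s.card * 3 := by rw [Finset.sum_const, smul_eq_mul]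

lemma natDegree_Tout_le (J : Finset ι) : (Tout a b x s J).natDegree ≤ s.card * 3 := by
  rw [Tout]
  refine (natDegree_mul_le).trans ?_
  rw [natDegree_C, zero_add]
  refine (natDegree_prod_le _ _).trans ?_
  calc ∑ j ∈ s, (Qout a b x J j).natDegree ≤ ∑ _j ∈ s, 3 :=
        Finset.sum_le_sum fun j _ => natDegree_Qout_le J j
    _ = s.card * 3 := by rw [Finset.sum_const, smul_eq_mul]

lemma coeff_Tin (J : Finset ι) :
    (Tin a b x s J).coeff (s.card * 3) = trm a b x J (s \ J) * (-(a*b))^s.card := by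
  rw [Tin, coeff_C_mul, coeff_prod_of_natDegree_le s (fun j => Qin a b x J j) 3 (fun j _ => natDegree_Qin_le J j)]
  congr 1
  rw [Finset.prod_congr rfl (fun j _ => coeff_Qin J j), Finset.prod_const]

lemma coeff_Tout (J : Finset ι) :
    (Tout a b x s J).coeff (s.card * 3) = trm a b x J (s \ J) * (-(a*b))^s.card := by
  rw [Tout, coeff_C_mul, coeff_prod_of_natDegree_le s (fun j => Qout a b x J j) 3 (fun j _ => natDegree_Qout_le J j)]
  congr 1
  rw [Finset.prod_congr rfl (fun j _ => coeff_Qout J j), Finset.prod_const]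

lemma natDegree_Pk_le (k : ℕ) : (Pk a b x s k).natDegree ≤ s.card * 3 := by
  rw [Pk]
  refine (natDegree_add_le _ _).trans ?_
  refine max_le ?_ ?_
  · exact natDegree_sum_le_of_forall_le _ _ fun J _ => natDegree_Tin_le J
  · exact natDegree_sum_le_of_forall_le _ _ fun J _ => natDegree_Tout_le J

lemma coeff_Pk (k : ℕ) :
    (Pk a b x s k).coeff (s.card * 3) =
      (EkS a b x s (k-1) + EkS a b x s k) * (-(a*b))^s.card := by
  rw [Pk, coeff_add, finset_sum_coeff, finset_sum_coeff, EkS, EkS, add_mul,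
    Finset.sum_mul, Finset.sum_mul]
  congr 1
  · exact Finset.sum_congr rfl fun J _ => coeff_Tin J
  · exact Finset.sum_congr rfl fun J _ => coeff_Tout J

end C5
open Finset Polynomial
section Main
variable {F : Type*} [Field F] {ι : Type*} [DecidableEq ι]

lemma poly_eq_zero_of_roots (P : F[X]) (D : ℕ) (hD : P.natDegree ≤ D)
    (hc : P.coeff D = 0) (Z : Finset F) (hZ : D ≤ Z.card)
    (hr : ∀ r ∈ Z, P.eval r = 0) : P = 0 := by
  by_contra hP
  have hlt : P.natDegree < D := by
    rcases lt_or_eq_of_le hD with h | h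
    · exact h
    · exact absurd (leadingCoeff_eq_zero.mp (by rw [leadingCoeff, h]; exact hc)) hP
  have hsub : Z.val ⊆ P.roots := by
    intro r hr'
    rw [Polynomial.mem_roots hP]
    exact hr r hr'
  have := Polynomial.card_le_degree_of_subset_roots hsub
  omega

theorem EkS_symm {a b : F} (hab : a*b ≠ 0) :
    ∀ (N : ℕ) (S : Finset ι) (x : ι → F), S.card ≤ N → GenH a b x S →
      ∀ k, k ≤ S.card → EkS a b x S k = EkS a b x S (S.card - k) := by
  intro N
  induction N with
  | zero =>
    intro S x hcard _ k hk
    have hc0 : S.card = 0 := Nat.le_zero.mp hcard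
    have hk0 : k = 0 := by omega
    rw [hk0, hc0]
  | succ N IH =>
    classical
    intro S x hcard hg k hk
    by_cases hk0 : k = 0
    · rw [hk0, EkS_zero, Nat.sub_zero, EkS_card]
    by_cases hkc : k = S.card
    · rw [hkc, Nat.sub_self, EkS_zero, EkS_card]
    -- now 1 ≤ k ≤ S.card - 1
    have hk1 : 1 ≤ k := Nat.one_le_iff_ne_zero.mpr hk0
    have hkn : k ≤ S.card - 1 := by omega
    have hn2 : 2 ≤ S.card := by omega
    obtain ⟨z, hz⟩ : ∃ z, z ∈ S := Finset.Nonempty.exists_mem (Finset.card_pos.mp (by omega))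
    set n := S.card with hn
    set s := S.erase z with hs
    have hzs : z ∉ s := Finset.notMem_erase z S
    have hS : S = insert z s := (Finset.insert_erase hz).symm
    have hcards : s.card = n - 1 := by rw [hs, Finset.card_erase_of_mem hz]
    have hg' : GenH a b x (insert z s) := hS ▸ hg
    have hgs : GenH a b x s := hg.mono (Finset.erase_subset z S)
    have hsub : ∀ i ∈ s, i ∈ S := fun i hi => (Finset.erase_subset z S) hi
    have hkn1 : 1 ≤ n - k := by omega
    -- IH for s
    have IH1 : ∀ q, q ≤ s.card → EkS a b x s q = EkS a b x s (s.card - q) :=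
      IH s x (by omega) hgs
    -- the difference polynomial
    set P := Pk a b x s k - Pk a b x s (n-k) with hP
    have hdeg : P.natDegree ≤ s.card * 3 :=
      (natDegree_sub_le _ _).trans (max_le (natDegree_Pk_le k) (natDegree_Pk_le (n-k)))
    have hcoeff : P.coeff (s.card * 3) = 0 := by
      rw [hP, coeff_sub, coeff_Pk, coeff_Pk]
      have e1 : EkS a b x s (k-1) = EkS a b x s (n-k) := by
        rw [IH1 (k-1) (by omega)]
        congr 1
        omega
      have e2 : EkS a b x s k = EkS a b x s (n-k-1) := by
        rw [IH1 k (by omega)]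
        congr 1
        omega
      rw [e1, e2]
      ring
    -- the root set
    set Z : Finset F := (s.image x ∪ s.image (fun m => a*b*x m)) ∪
      s.image (fun m => (a*b)⁻¹ * x m) with hZ
    have hinj1 : Set.InjOn x s := by
      intro i hi j hj hij
      by_contra hne
      exact hg.hxx i (hsub i hi) j (hsub j hj) hne (sub_eq_zero.mpr hij)
    have hcZ : s.card * 3 ≤ Z.card := by
      have hd1 : Disjoint (s.image x) (s.image (fun m => a*b*x m)) := by
        rw [Finset.disjoint_left]
        rintro r hr1 hr2
        obtain ⟨i, hi, rfl⟩ := Finset.mem_image.mp hr1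
        obtain ⟨j, hj, hji⟩ := Finset.mem_image.mp hr2
        exact hg.hxc i (hsub i hi) j (hsub j hj) (by rw [← hji]; ring)
      have hd2 : Disjoint (s.image x ∪ s.image (fun m => a*b*x m))
          (s.image (fun m => (a*b)⁻¹ * x m)) := by
        rw [Finset.disjoint_left]
        rintro r hr1 hr2
        obtain ⟨j, hj, hji⟩ := Finset.mem_image.mp hr2
        rcases Finset.mem_union.mp hr1 with hr1 | hr1
        · obtain ⟨i, hi, rfl⟩ := Finset.mem_image.mp hr1
          apply hg.hxc j (hsub j hj) i (hsub i hi)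
          have : a*b*(x i) = x j := by
            rw [← hji]
            rw [← mul_assoc, mul_inv_cancel₀ hab, one_mul]
          rw [← this]
          ring
        · obtain ⟨i, hi, rfl⟩ := Finset.mem_image.mp hr1
          apply hg.hxc2 j (hsub j hj) i (hsub i hi)
          have : a*b*(a*b*(x i)) = x j := by
            rw [← hji]
            rw [← mul_assoc, mul_inv_cancel₀ hab, one_mul]
          rw [← this]
          ring
      rw [hZ, Finset.card_union_of_disjoint hd2, Finset.card_union_of_disjoint hd1]
      have i1 : (s.image x).card = s.card := Finset.card_image_of_injOn hinj1
      have i2 : (s.image (fun m => a*b*x m)).card = s.card :=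
        Finset.card_image_of_injOn (fun i hi j hj hij =>
          hinj1 hi hj (mul_left_cancel₀ hab hij))
      have i3 : (s.image (fun m => (a*b)⁻¹ * x m)).card = s.card :=
        Finset.card_image_of_injOn (fun i hi j hj hij =>
          hinj1 hi hj (mul_left_cancel₀ (inv_ne_zero hab) hij))
      omega
    have hroots : ∀ r ∈ Z, P.eval r = 0 := by
      intro r hr
      rw [hP, eval_sub]
      rcases Finset.mem_union.mp hr with hr1 | hr1
      · rcases Finset.mem_union.mp hr1 with hr2 | hr2
        · obtain ⟨m, hm, rfl⟩ := Finset.mem_image.mp hr2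
          rw [eval_Pk_root_x hzs hg' hm k hk1, eval_Pk_root_x hzs hg' hm (n-k) hkn1,
            sub_self]
        · obtain ⟨m, hm, rfl⟩ := Finset.mem_image.mp hr2
          rw [eval_Pk_root_c hzs hg' hab hm k hk1, eval_Pk_root_c hzs hg' hab hm (n-k) hkn1]
          have hw : (s.erase m).card = n - 2 := by
            rw [Finset.card_erase_of_mem hm]
            omega
          have : EkS a b x (s.erase m) (k-1) = EkS a b x (s.erase m) (n-k-1) := by
            rw [IH (s.erase m) x (by omega) (hgs.mono (Finset.erase_subset m s)) (k-1)
              (by omega), hw]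
            congr 1
            omega
          rw [this, sub_self]
      · obtain ⟨m, hm, rfl⟩ := Finset.mem_image.mp hr1
        rw [eval_Pk_root_inv hzs hg' hab hm k hk1, eval_Pk_root_inv hzs hg' hab hm (n-k) hkn1]
        have hw : (s.erase m).card = n - 2 := by
          rw [Finset.card_erase_of_mem hm]
          omega
        have : EkS a b x (s.erase m) (k-1) = EkS a b x (s.erase m) (n-k-1) := by
          rw [IH (s.erase m) x (by omega) (hgs.mono (Finset.erase_subset m s)) (k-1)
            (by omega), hw]
          congr 1
          omega
        rw [this, sub_self]
    have hP0 : P = 0 := poly_eq_zero_of_roots P (s.card*3) hdeg hcoeff Z hcZ hroots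
    -- evaluate at x z
    have heval : (Pk a b x s k).eval (x z) = (Pk a b x s (n-k)).eval (x z) := by
      have h0 : (Pk a b x s k).eval (x z) - (Pk a b x s (n-k)).eval (x z) = 0 := by
        rw [← eval_sub, ← hP, hP0, eval_zero]
      exact sub_eq_zero.mp h0
    rw [eval_Pk_generic hzs hg' k hk1, eval_Pk_generic hzs hg' (n-k) hkn1] at heval
    have hΔ : ∏ j ∈ s, ((x z - x j)*(x z - a*b*x j)) * (x j - a*b*x z) ≠ 0 := by
      rw [Finset.prod_ne_zero_iff]
      intro j hj
      have hzj : z ≠ j := fun h => hzs (h ▸ hj)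
      exact mul_ne_zero (mul_ne_zero (hg.hxx z hz j (hsub j hj) hzj)
        (hg.hxc z hz j (hsub j hj))) (hg.hxc j (hsub j hj) z hz)
    rw [hS]
    exact mul_right_cancel₀ hΔ heval
end Main
section Top
open Finset

lemma ratfld_injective (n : ℕ) : Function.Injective
    (algebraMap (MvPolynomial (Fin n ⊕ Fin 2) ℚ) (RatFld n)) :=
  IsFractionRing.injective _ _

lemma algebraMap_ne_zero_of_eval {n : ℕ} (p : MvPolynomial (Fin n ⊕ Fin 2) ℚ)
    (v : (Fin n ⊕ Fin 2) → ℚ) (hv : MvPolynomial.eval v p ≠ 0) :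
    algebraMap (MvPolynomial (Fin n ⊕ Fin 2) ℚ) (RatFld n) p ≠ 0 := by
  intro h
  exact hv (by rw [(map_eq_zero_iff _ (ratfld_injective n)).mp h, map_zero])

lemma genh_ratfld (n : ℕ) : GenH (pα n) (pβ n) (xv n) (Finset.univ : Finset (Fin n)) := by
  constructor
  · intro i _ j _ hij
    rw [xv, xv, ← map_sub]
    refine algebraMap_ne_zero_of_eval _ (fun s => if s = Sum.inl i then (1:ℚ) else 0) ?_
    have : (Sum.inl j : Fin n ⊕ Fin 2) ≠ Sum.inl i := by simp [Ne.symm hij]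
    simp [this]
  · intro i _ j _
    rw [xv, xv, pα, pβ, ← map_mul, ← map_mul, ← map_sub]
    refine algebraMap_ne_zero_of_eval _ (fun s => if s = Sum.inl i then (1:ℚ) else 0) ?_
    simp
  · intro i _ j _
    rw [xv, xv, pα, pβ, ← map_mul, ← map_mul, ← map_mul, ← map_sub]
    refine algebraMap_ne_zero_of_eval _ (fun s => if s = Sum.inl i then (1:ℚ) else 0) ?_
    simp

lemma pαβ_ne_zero (n : ℕ) : pα n * pβ n ≠ 0 := by
  rw [pα, pβ, ← map_mul]
  refine algebraMap_ne_zero_of_eval _ (fun _ => (1:ℚ)) ?_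
  simp


/-- Residue symmetry identity: for distinct indeterminates `x_1, …, x_n` and parameters
`α, β`, and for each `1 ≤ k < n`,
`∑_I ∏_{i∈I, j∉I} ((x_i - αx_j)(x_i - βx_j))/((x_i - x_j)(x_i - αβx_j))
 = ∑_I ∏_{i∈I, j∉I} ((αx_i - x_j)(βx_i - x_j))/((x_i - x_j)(αβx_i - x_j))`,
both sums over `k`-element subsets `I ⊆ {1, …, n}`, as an identity of rational
functions. -/
theorem residue_symmetry (n k : ℕ) (hk1 : 1 ≤ k) (hkn : k < n) :
    ∑ I ∈ Finset.powersetCard k (Finset.univ : Finset (Fin n)),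
      ∏ i ∈ I, ∏ j ∈ Iᶜ,
        ((xv n i - pα n * xv n j) * (xv n i - pβ n * xv n j)) /
          ((xv n i - xv n j) * (xv n i - pα n * pβ n * xv n j)) =
    ∑ I ∈ Finset.powersetCard k (Finset.univ : Finset (Fin n)),
      ∏ i ∈ I, ∏ j ∈ Iᶜ,
        ((pα n * xv n i - xv n j) * (pβ n * xv n i - xv n j)) /
          ((xv n i - xv n j) * (pα n * pβ n * xv n i - xv n j)) := by
  have hcompl : ∀ I : Finset (Fin n), Iᶜ = Finset.univ \ I := fun I => by
    ext u; simp
  -- LHS is EkS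
  have hL : ∑ I ∈ Finset.powersetCard k (Finset.univ : Finset (Fin n)),
      ∏ i ∈ I, ∏ j ∈ Iᶜ,
        ((xv n i - pα n * xv n j) * (xv n i - pβ n * xv n j)) /
          ((xv n i - xv n j) * (xv n i - pα n * pβ n * xv n j)) =
      EkS (pα n) (pβ n) (xv n) Finset.univ k := by
    refine Finset.sum_congr rfl fun I _ => ?_
    rw [← hcompl]
    rfl
  -- RHS is EkS at n - k
  have hR : ∑ I ∈ Finset.powersetCard k (Finset.univ : Finset (Fin n)),
      ∏ i ∈ I, ∏ j ∈ Iᶜ,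
        ((pα n * xv n i - xv n j) * (pβ n * xv n i - xv n j)) /
          ((xv n i - xv n j) * (pα n * pβ n * xv n i - xv n j)) =
      EkS (pα n) (pβ n) (xv n) Finset.univ (n - k) := by
    have hterm : ∀ I : Finset (Fin n),
        ∏ i ∈ I, ∏ j ∈ Iᶜ,
          ((pα n * xv n i - xv n j) * (pβ n * xv n i - xv n j)) /
            ((xv n i - xv n j) * (pα n * pβ n * xv n i - xv n j)) =
        trm (pα n) (pβ n) (xv n) Iᶜ I := by
      intro I
      rw [trm, Finset.prod_comm]
      refine Finset.prod_congr rfl fun i _ => Finset.prod_congr rfl fun j _ => ?_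
      rw [ffun]
      congr 1 <;> ring
    rw [EkS]
    rw [Finset.sum_congr rfl fun I _ => hterm I]
    refine Finset.sum_bij' (fun I _ => Iᶜ) (fun J _ => Jᶜ) ?_ ?_ ?_ ?_ ?_
    · intro I hI
      rw [Finset.mem_powersetCard_univ] at hI ⊢
      rw [Finset.card_compl, hI, Fintype.card_fin]
    · intro J hJ
      rw [Finset.mem_powersetCard_univ] at hJ ⊢
      rw [Finset.card_compl, hJ, Fintype.card_fin]
      omega
    · intro I _; exact compl_compl I
    · intro J _; exact compl_compl J
    · intro I _
      show trm (pα n) (pβ n) (xv n) Iᶜ I =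
        trm (pα n) (pβ n) (xv n) Iᶜ (Finset.univ \ Iᶜ)
      rw [← hcompl, compl_compl]
  rw [hL, hR]
  have := EkS_symm (pαβ_ne_zero n) n (Finset.univ : Finset (Fin n)) (xv n)
    (by rw [Finset.card_univ, Fintype.card_fin]) (genh_ratfld n) k
    (by rw [Finset.card_univ, Fintype.card_fin]; omega)
  rw [Finset.card_univ, Fintype.card_fin] at this
  exact this
end Top
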